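/- The Hamacher scalar multiplication of interval valued q-rung orthopair fuzzy numbers preserves the q-rung constraint: for every real parameter φ > 0, real exponent ϑ > 0, and real numbers x, y ∈ [0,1] with x + y ≤ 1, one has f_{φ,ϑ}(x) + g_{φ,ϑ}(y) ≤ 1, where f_{φ,ϑ}(x) = ((1+(φ−1)x)^ϑ − (1−x)^ϑ)/((1+(φ−1)x)^ϑ + (φ−1)(1−x)^ϑ) and g_{φ,ϑ}(y) = φ·y^ϑ/((1+(φ−1)(1−y))^ϑ + (φ−1)y^ϑ). -/
import Mathlib


/-- Hamacher scalar-multiplication membership function with parameters `φ` and `ϑ`. -/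
noncomputable def hamacherScalarMem (φ ϑ x : ℝ) : ℝ :=
  ((1 + (φ - 1) * x) ^ ϑ - (1 - x) ^ ϑ) /
    ((1 + (φ - 1) * x) ^ ϑ + (φ - 1) * (1 - x) ^ ϑ)

/-- Hamacher scalar-multiplication non-membership function with parameters `φ` and `ϑ`. -/
noncomputable def hamacherScalarNonMem (φ ϑ y : ℝ) : ℝ :=
  φ * y ^ ϑ / ((1 + (φ - 1) * (1 - y)) ^ ϑ + (φ - 1) * y ^ ϑ)

lemma hamacher_base_pos (φ t : ℝ) (hφ : 0 < φ) (ht0 : 0 ≤ t) (ht1 : t ≤ 1) :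
    0 < 1 + (φ - 1) * t := by
  rcases le_total φ 1 with h | h
  · nlinarith [mul_nonneg (sub_nonneg.2 ht1) (sub_nonneg.2 h)]
  · nlinarith [mul_nonneg (sub_nonneg.2 h) ht0]

lemma hamacher_denom_pos (φ ϑ t : ℝ) (hφ : 0 < φ) (hϑ : 0 < ϑ)
    (ht0 : 0 ≤ t) (ht1 : t ≤ 1) :
    0 < (1 + (φ - 1) * t) ^ ϑ + (φ - 1) * (1 - t) ^ ϑ := by
  have ha0 : (0:ℝ) ≤ 1 - t := by linarith
  have hA : 0 < 1 + (φ - 1) * t := hamacher_base_pos φ t hφ ht0 ht1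
  have hle : (1 - t) ^ ϑ ≤ (1 + (φ - 1) * t) ^ ϑ := by
    apply Real.rpow_le_rpow ha0 _ hϑ.le
    nlinarith [mul_nonneg hφ.le ht0]
  have hAp : 0 < (1 + (φ - 1) * t) ^ ϑ := Real.rpow_pos_of_pos hA ϑ
  rcases eq_or_lt_of_le ha0 with h | h
  · rw [← h, Real.zero_rpow hϑ.ne']
    simpa using hAp
  · have hap : 0 < (1 - t) ^ ϑ := Real.rpow_pos_of_pos h ϑ
    rcases le_total 1 φ with h' | h'
    · nlinarith [mul_nonneg (sub_nonneg.2 h') hap.le]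
    · nlinarith [mul_pos hφ hap]

theorem hamacherScalar_preserves_qrung (φ ϑ x y : ℝ) (hφ : 0 < φ) (hϑ : 0 < ϑ)
    (hx : x ∈ Set.Icc (0:ℝ) 1) (hy : y ∈ Set.Icc (0:ℝ) 1) (hxy : x + y ≤ 1) :
    hamacherScalarMem φ ϑ x + hamacherScalarNonMem φ ϑ y ≤ 1 := by
  obtain ⟨hx0, hx1⟩ := hx
  obtain ⟨hy0, hy1⟩ := hy
  have hA : 0 < 1 + (φ - 1) * x := hamacher_base_pos φ x hφ hx0 hx1
  have hB : 0 < 1 + (φ - 1) * (1 - y) := hamacher_base_pos φ (1 - y) hφ (by linarith) (by linarith)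
  have hD : 0 < (1 + (φ - 1) * x) ^ ϑ + (φ - 1) * (1 - x) ^ ϑ :=
    hamacher_denom_pos φ ϑ x hφ hϑ hx0 hx1
  have hE : 0 < (1 + (φ - 1) * (1 - y)) ^ ϑ + (φ - 1) * y ^ ϑ := by
    have := hamacher_denom_pos φ ϑ (1 - y) hφ hϑ (by linarith) (by linarith)
    simpa using this
  -- key monotonicity inequality
  have hyA : y * (1 + (φ - 1) * x) ≤ (1 - x) * (1 + (φ - 1) * (1 - y)) := by
    nlinarith [mul_nonneg hφ.le (by linarith : (0:ℝ) ≤ 1 - x - y)]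
  have hkey : (y * (1 + (φ - 1) * x)) ^ ϑ ≤ ((1 - x) * (1 + (φ - 1) * (1 - y))) ^ ϑ :=
    Real.rpow_le_rpow (mul_nonneg hy0 hA.le) hyA hϑ.le
  rw [Real.mul_rpow hy0 hA.le, Real.mul_rpow (by linarith) hB.le] at hkey
  unfold hamacherScalarMem hamacherScalarNonMem
  rw [div_add_div _ _ hD.ne' hE.ne', div_le_one (mul_pos hD hE)]
  nlinarith [mul_nonneg hφ.le (sub_nonneg.2 hkey)]
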